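/- Let T be a self-adjoint bounded operator on a Hilbert space H and let (xₙ) be a sequence of unit vectors with ‖T²xₙ‖ → ‖T²‖ = ‖T‖². Then for every integer k ≥ 0, ‖T^{2k}xₙ − ‖T‖^{2k}·xₙ‖ → 0 as n → ∞. -/

import Mathlib

open Filter Topology

/-- For a self-adjoint operator `T` and a norming sequence of `T²`,
`‖T^{2k} xₙ - ‖T‖^{2k} xₙ‖ → 0` for every `k ≥ 0`. -/
theorem selfAdjoint_even_power_norming
    {H : Type*} [NormedAddCommGroup H] [InnerProductSpace ℂ H] [CompleteSpace H]
    (T : H →L[ℂ] H) (hT : IsSelfAdjoint T)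
    (x : ℕ → H) (hx : ∀ n, ‖x n‖ = 1)
    (hnorm : Tendsto (fun n => ‖(T ^ 2) (x n)‖) atTop (𝓝 (‖T‖ ^ 2))) :
    ∀ k : ℕ,
      Tendsto (fun n => ‖(T ^ (2 * k)) (x n) - (‖T‖ ^ (2 * k) : ℝ) • x n‖) atTop (𝓝 0) := by
  set c : ℝ := ‖T‖ ^ 2 with hc
  have hS2 : ‖(T ^ 2 : H →L[ℂ] H)‖ = c := by
    rw [pow_two]
    nth_rewrite 1 [← hT.star_eq]
    rw [CStarRing.norm_star_mul_self, hc, sq]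
  -- Base case : ‖T² xₙ - c xₙ‖ → 0
  have base : Tendsto (fun n => ‖(T ^ 2) (x n) - c • x n‖) atTop (𝓝 0) := by
    by_cases hT0 : T = 0
    · simp [hT0, hc]
    · have hTn : (0 : ℝ) < ‖T‖ := norm_pos_iff.mpr hT0
      -- ‖T xₙ‖² → c
      have hTx : Tendsto (fun n => ‖T (x n)‖ ^ 2) atTop (𝓝 c) := by
        have hlow : ∀ n, (‖(T ^ 2) (x n)‖ / ‖T‖) ^ 2 ≤ ‖T (x n)‖ ^ 2 := by
          intro n
          have h1 : ‖(T ^ 2) (x n)‖ ≤ ‖T‖ * ‖T (x n)‖ := by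
            have : (T ^ 2) (x n) = T (T (x n)) := by
              rw [pow_two]; rfl
            rw [this]
            exact T.le_opNorm _
          have h2 : ‖(T ^ 2) (x n)‖ / ‖T‖ ≤ ‖T (x n)‖ := by
            rw [div_le_iff₀ hTn, mul_comm]; exact h1
          exact pow_le_pow_left₀ (by positivity) h2 2
        have hup : ∀ n, ‖T (x n)‖ ^ 2 ≤ c := by
          intro n
          rw [hc]
          refine pow_le_pow_left₀ (norm_nonneg _) ?_ 2
          calc ‖T (x n)‖ ≤ ‖T‖ * ‖x n‖ := T.le_opNorm _
            _ = ‖T‖ := by rw [hx n, mul_one]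
        have hglow : Tendsto (fun n => (‖(T ^ 2) (x n)‖ / ‖T‖) ^ 2) atTop (𝓝 c) := by
          have := (hnorm.div_const ‖T‖).pow 2
          convert this using 2
          rw [hc]
          field_simp
        exact tendsto_of_tendsto_of_tendsto_of_le_of_le hglow tendsto_const_nhds hlow hup
      -- squared norm identity
      have hsq : ∀ n, ‖(T ^ 2) (x n) - c • x n‖ ^ 2
          = ‖(T ^ 2) (x n)‖ ^ 2 - 2 * c * ‖T (x n)‖ ^ 2 + c ^ 2 := by
        intro n
        have hinner : RCLike.re (inner ℂ ((T ^ 2) (x n)) (x n) : ℂ) = ‖T (x n)‖ ^ 2 := by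
          have h1 : (inner ℂ ((T ^ 2) (x n)) (x n) : ℂ) = inner ℂ (T (x n)) (T (x n)) := by
            have : (T ^ 2) (x n) = T (T (x n)) := by rw [pow_two]; rfl
            rw [this]
            nth_rewrite 1 [← hT.adjoint_eq]
            exact ContinuousLinearMap.adjoint_inner_left T (x n) (T (x n))
          rw [h1, inner_self_eq_norm_sq]
        have hexp := @norm_sub_sq ℂ _ _ _ _ ((T ^ 2) (x n)) (c • x n)
        rw [hexp]
        have h2 : (inner ℂ ((T ^ 2) (x n)) (c • x n) : ℂ)
            = (c : ℂ) * inner ℂ ((T ^ 2) (x n)) (x n) := by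
          rw [show (c • x n) = (c : ℂ) • x n from (Complex.coe_smul c (x n)).symm,
            inner_smul_right]
        have h3 : RCLike.re (inner ℂ ((T ^ 2) (x n)) (c • x n) : ℂ) = c * ‖T (x n)‖ ^ 2 := by
          rw [h2]
          simp
          left
          simpa using hinner
        rw [h3, norm_smul, hx n]
        simp [abs_of_nonneg (by positivity : (0:ℝ) ≤ c)]
        ring
      have hsq_tendsto : Tendsto (fun n => ‖(T ^ 2) (x n) - c • x n‖ ^ 2) atTop (𝓝 0) := by
        have : Tendsto (fun n => ‖(T ^ 2) (x n)‖ ^ 2 - 2 * c * ‖T (x n)‖ ^ 2 + c ^ 2)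
            atTop (𝓝 (c ^ 2 - 2 * c * c + c ^ 2)) := by
          exact ((hnorm.pow 2).sub ((hTx.const_mul (2 * c)))).add tendsto_const_nhds
        have h0 : c ^ 2 - 2 * c * c + c ^ 2 = 0 := by ring
        rw [h0] at this
        exact this.congr (fun n => (hsq n).symm)
      have := (Real.continuous_sqrt.tendsto 0).comp hsq_tendsto
      rw [Real.sqrt_zero] at this
      exact this.congr (fun n => by
        simp [Function.comp, Real.sqrt_sq (norm_nonneg _)])
  -- Induction on k
  have key : ∀ k : ℕ, Tendsto (fun n => ‖((T ^ 2) ^ k) (x n) - (c ^ k) • x n‖) atTop (𝓝 0) := by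
    intro k
    induction k with
    | zero => simpa using (tendsto_const_nhds : Tendsto (fun _ : ℕ => (0:ℝ)) atTop (𝓝 0))
    | succ k ih =>
      have hbound : ∀ n, ‖((T ^ 2) ^ (k + 1)) (x n) - c ^ (k + 1) • x n‖ ≤
          ‖(T ^ 2 : H →L[ℂ] H)‖ * ‖((T ^ 2) ^ k) (x n) - c ^ k • x n‖
            + c ^ k * ‖(T ^ 2) (x n) - c • x n‖ := by
        intro n
        have heq : ((T ^ 2) ^ (k + 1)) (x n) - c ^ (k + 1) • x n
            = (T ^ 2) (((T ^ 2) ^ k) (x n) - c ^ k • x n)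
              + c ^ k • ((T ^ 2) (x n) - c • x n) := by
          have hp : ((T ^ 2) ^ (k + 1)) (x n) = (T ^ 2) (((T ^ 2) ^ k) (x n)) := by
            rw [pow_succ']; rfl
          rw [hp, map_sub, (T ^ 2).map_smul_of_tower, smul_sub, smul_smul, ← pow_succ]
          abel
        rw [heq]
        calc ‖(T ^ 2) (((T ^ 2) ^ k) (x n) - c ^ k • x n)
              + c ^ k • ((T ^ 2) (x n) - c • x n)‖
            ≤ ‖(T ^ 2) (((T ^ 2) ^ k) (x n) - c ^ k • x n)‖
              + ‖c ^ k • ((T ^ 2) (x n) - c • x n)‖ := norm_add_le _ _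
          _ ≤ ‖(T ^ 2 : H →L[ℂ] H)‖ * ‖((T ^ 2) ^ k) (x n) - c ^ k • x n‖
              + c ^ k * ‖(T ^ 2) (x n) - c • x n‖ := by
              gcongr
              · exact (T ^ 2).le_opNorm _
              · rw [norm_smul]
                gcongr
                exact le_of_eq (abs_of_nonneg (by positivity))
      have hlim : Tendsto (fun n => ‖(T ^ 2 : H →L[ℂ] H)‖ * ‖((T ^ 2) ^ k) (x n) - c ^ k • x n‖
            + c ^ k * ‖(T ^ 2) (x n) - c • x n‖) atTop (𝓝 0) := by
        have := (ih.const_mul ‖(T ^ 2 : H →L[ℂ] H)‖).add (base.const_mul (c ^ k))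
        simpa using this
      exact squeeze_zero (fun n => norm_nonneg _) hbound hlim
  intro k
  have := key k
  have hp : (T ^ (2 * k) : H →L[ℂ] H) = (T ^ 2) ^ k := by rw [← pow_mul]
  have hcp : (‖T‖ ^ (2 * k) : ℝ) = c ^ k := by rw [hc, ← pow_mul]
  rw [hp, hcp]
  exact this
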